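/- arXiv:1610.03232 — 5 statements merged into one kernel-verified Lean document; each statement's English description precedes it below -/
import Mathlib

section
/- Let T > 0, let A : [0,T] → ℝ^{N×N} be continuous, and let r : [0,T] → ℝ^N be continuous. Suppose p, p̃, q : [0,T] → ℝ^N are differentiable and satisfy p′(t) = A(t) p(t), p̃′(t) = A(t) p̃(t) + r(t), and q′(t) = −A(t)ᵀ q(t) with q(T) = z for a given vector z ∈ ℝ^N. Then |zᵀ (p(T) − p̃(T))| ≤ ∫₀ᵀ ‖q(t)‖_∞ ‖r(t)‖_{ℓ¹} dt + ‖q(0)‖_∞ ‖p(0) − p̃(0)‖_{ℓ¹}, where ‖·‖_∞ denotes the maximum-absolute-entry norm and ‖·‖_{ℓ¹} the sum-of-absolute-entries norm on ℝ^N. -/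
open Matrix

/-- A posteriori error estimate with the dual solution:
`|zᵀ (p(T) − p̃(T))| ≤ ∫₀ᵀ ‖q(t)‖_∞ ‖r(t)‖_{ℓ¹} dt + ‖q(0)‖_∞ ‖p(0) − p̃(0)‖_{ℓ¹}`.
Here `‖·‖` on `Fin N → ℝ` is the sup (max-absolute-entry) norm, and the ℓ¹ norm
is written as the sum of absolute values of the entries. -/
theorem adjoint_error_estimate_dual {N : ℕ} (T : ℝ) (hT : 0 < T)
    (A : ℝ → Matrix (Fin N) (Fin N) ℝ) (hA : ContinuousOn A (Set.Icc 0 T))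
    (r : ℝ → (Fin N → ℝ)) (hr : ContinuousOn r (Set.Icc 0 T))
    (p ptilde q : ℝ → (Fin N → ℝ)) (z : Fin N → ℝ)
    (hp : ∀ t ∈ Set.Icc (0:ℝ) T, HasDerivAt p ((A t) *ᵥ (p t)) t)
    (hptilde : ∀ t ∈ Set.Icc (0:ℝ) T,
      HasDerivAt ptilde ((A t) *ᵥ (ptilde t) + r t) t)
    (hq : ∀ t ∈ Set.Icc (0:ℝ) T, HasDerivAt q (-((A t)ᵀ *ᵥ (q t))) t)
    (hqT : q T = z) :
    |z ⬝ᵥ (p T - ptilde T)|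
      ≤ (∫ t in (0:ℝ)..T, ‖q t‖ * ∑ i, |r t i|)
        + ‖q 0‖ * ∑ i, |p 0 i - ptilde 0 i| := by
  have huIcc : Set.uIcc (0:ℝ) T = Set.Icc 0 T := Set.uIcc_of_le hT.le
  -- continuity
  have hqc : ContinuousOn q (Set.Icc 0 T) := fun t ht => ((hq t ht).continuousAt).continuousWithinAt
  have hrc := hr
  -- derivative of g t = q t ⬝ᵥ (p t - ptilde t)
  have hg : ∀ t ∈ Set.Icc (0:ℝ) T,
      HasDerivAt (fun s => ∑ i, q s i * (p s i - ptilde s i)) (-(q t ⬝ᵥ r t)) t := by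
    intro t ht
    have hd : HasDerivAt (fun s => ∑ i, q s i * (p s i - ptilde s i))
        (∑ i, ((-((A t)ᵀ *ᵥ (q t))) i * (p t i - ptilde t i)
          + q t i * ((A t *ᵥ p t) i - ((A t *ᵥ ptilde t) i + r t i)))) t := by
      apply HasDerivAt.fun_sum
      intro i _
      exact ((hasDerivAt_pi.1 (hq t ht)) i).mul
        (((hasDerivAt_pi.1 (hp t ht)) i).sub ((hasDerivAt_pi.1 (hptilde t ht)) i))
    convert hd using 1
    simp only [Matrix.mulVec, dotProduct, Matrix.transpose_apply, Pi.neg_apply,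
      neg_mul, mul_sub, mul_add, Finset.sum_sub_distrib, Finset.sum_add_distrib,
      Finset.sum_neg_distrib, Finset.sum_mul, Finset.mul_sum]
    rw [Finset.sum_comm (f := fun x i => q t x * (A t x i * p t i)),
      Finset.sum_comm (f := fun x i => q t x * (A t x i * ptilde t i))]
    simp only [show ∀ a b c : ℝ, a*(b*c) = b*a*c from fun a b c => by ring]
    ring
  -- integrability
  have hqrc : ContinuousOn (fun t => -(q t ⬝ᵥ r t)) (Set.Icc 0 T) := by
    apply ContinuousOn.neg
    simp only [dotProduct]
    exact continuousOn_finset_sum _ fun i _ =>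
      ((continuous_apply i).comp_continuousOn hqc).mul ((continuous_apply i).comp_continuousOn hrc)
  have hint1 : IntervalIntegrable (fun t => -(q t ⬝ᵥ r t)) MeasureTheory.volume 0 T :=
    (hqrc.mono (le_of_eq huIcc)).intervalIntegrable
  have hint2 : IntervalIntegrable (fun t => ‖q t‖ * ∑ i, |r t i|) MeasureTheory.volume 0 T := by
    apply ContinuousOn.intervalIntegrable
    rw [huIcc]
    exact hqc.norm.mul (continuousOn_finset_sum _ fun i _ =>
      ((continuous_apply i).comp_continuousOn hrc).abs)
  -- FTC
  have hftc : (∫ t in (0:ℝ)..T, -(q t ⬝ᵥ r t))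
      = (∑ i, q T i * (p T i - ptilde T i)) - (∑ i, q 0 i * (p 0 i - ptilde 0 i)) := by
    apply intervalIntegral.integral_eq_sub_of_hasDerivAt
    · intro t ht; exact hg t (huIcc ▸ ht)
    · exact hint1
  have hzT : z ⬝ᵥ (p T - ptilde T) = ∑ i, q T i * (p T i - ptilde T i) := by
    simp [dotProduct, hqT]
  rw [hzT]
  have key : (∑ i, q T i * (p T i - ptilde T i))
      = (∫ t in (0:ℝ)..T, -(q t ⬝ᵥ r t)) + ∑ i, q 0 i * (p 0 i - ptilde 0 i) := by
    rw [hftc]; ring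
  rw [key]
  have h1 : |∫ t in (0:ℝ)..T, -(q t ⬝ᵥ r t)| ≤ ∫ t in (0:ℝ)..T, ‖q t‖ * ∑ i, |r t i| := by
    calc |∫ t in (0:ℝ)..T, -(q t ⬝ᵥ r t)| ≤ ∫ t in (0:ℝ)..T, |(-(q t ⬝ᵥ r t))| := by
          simpa [Real.norm_eq_abs] using intervalIntegral.norm_integral_le_integral_norm
            (μ := MeasureTheory.volume) (f := fun t => -(q t ⬝ᵥ r t)) hT.le
      _ ≤ ∫ t in (0:ℝ)..T, ‖q t‖ * ∑ i, |r t i| := by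
          apply intervalIntegral.integral_mono_on hT.le hint1.abs hint2
          intro t ht
          rw [abs_neg]
          calc |q t ⬝ᵥ r t| ≤ ∑ i, |q t i * r t i| := Finset.abs_sum_le_sum_abs _ _
            _ ≤ ∑ i, ‖q t‖ * |r t i| := by
                apply Finset.sum_le_sum; intro i _
                rw [abs_mul]
                exact mul_le_mul_of_nonneg_right (norm_le_pi_norm (q t) i) (abs_nonneg _)
            _ = ‖q t‖ * ∑ i, |r t i| := by rw [Finset.mul_sum]
  have h2 : |∑ i, q 0 i * (p 0 i - ptilde 0 i)| ≤ ‖q 0‖ * ∑ i, |p 0 i - ptilde 0 i| := by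
    calc |∑ i, q 0 i * (p 0 i - ptilde 0 i)| ≤ ∑ i, |q 0 i * (p 0 i - ptilde 0 i)| :=
        Finset.abs_sum_le_sum_abs _ _
      _ ≤ ∑ i, ‖q 0‖ * |p 0 i - ptilde 0 i| := by
          apply Finset.sum_le_sum; intro i _
          rw [abs_mul]
          exact mul_le_mul_of_nonneg_right (norm_le_pi_norm (q 0) i) (abs_nonneg _)
      _ = ‖q 0‖ * ∑ i, |p 0 i - ptilde 0 i| := by rw [Finset.mul_sum]
  calc |(∫ t in (0:ℝ)..T, -(q t ⬝ᵥ r t)) + ∑ i, q 0 i * (p 0 i - ptilde 0 i)|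
      ≤ |∫ t in (0:ℝ)..T, -(q t ⬝ᵥ r t)| + |∑ i, q 0 i * (p 0 i - ptilde 0 i)| := abs_add_le _ _
    _ ≤ _ := add_le_add h1 h2
end

section
/- Let T > 0 and let A : [0,T] → ℝ^{N×N} be continuous such that for each t, A(t) is a Markov generator, i.e., its off-diagonal entries are nonnegative and each of its columns sums to zero. Let r : [0,T] → ℝ^N be continuous, and suppose p, p̃ : [0,T] → ℝ^N are differentiable with p′(t) = A(t) p(t) and p̃′(t) = A(t) p̃(t) + r(t). Then for every z ∈ ℝ^N, |zᵀ (p(T) − p̃(T))| ≤ ‖z‖_∞ ( ∫₀ᵀ ‖r(t)‖_{ℓ¹} dt + ‖p(0) − p̃(0)‖_{ℓ¹} ). -/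
open Matrix

open Set Filter

/-- Key dissipativity fact for Markov generators. -/
lemma markov_dissipative {N : ℕ} (A : Matrix (Fin N) (Fin N) ℝ)
    (hpos : ∀ i j, i ≠ j → 0 ≤ A i j) (hcol : ∀ j, ∑ i, A i j = 0)
    (e σ : Fin N → ℝ) (hσ1 : ∀ i, |σ i| ≤ 1) (hσe : ∀ i, σ i * e i = |e i|) :
    ∑ i, σ i * (A *ᵥ e) i ≤ 0 := by
  have h1 : ∑ i, σ i * (A *ᵥ e) i = ∑ j, ∑ i, A i j * (σ i * e j) := by
    simp only [Matrix.mulVec, dotProduct, Finset.mul_sum]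
    rw [Finset.sum_comm]
    congr 1; ext i; congr 1; ext j; ring
  rw [h1]
  apply Finset.sum_nonpos
  intro j _
  have hsplit := Finset.add_sum_erase Finset.univ (fun i => A i j * (σ i * e j)) (Finset.mem_univ j)
  calc ∑ i, A i j * (σ i * e j)
      = A j j * (σ j * e j) + ∑ i ∈ Finset.univ.erase j, A i j * (σ i * e j) := hsplit.symm
    _ ≤ A j j * |e j| + ∑ i ∈ Finset.univ.erase j, A i j * |e j| := by
        rw [hσe j]
        refine add_le_add le_rfl (Finset.sum_le_sum fun i hi => ?_)
        refine mul_le_mul_of_nonneg_left ?_ (hpos i j (Finset.ne_of_mem_erase hi))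
        calc σ i * e j ≤ |σ i * e j| := le_abs_self _
          _ = |σ i| * |e j| := abs_mul _ _
          _ ≤ 1 * |e j| := mul_le_mul_of_nonneg_right (hσ1 i) (abs_nonneg _)
          _ = |e j| := one_mul _
    _ = (∑ i, A i j) * |e j| := by
        rw [Finset.sum_mul, ← Finset.add_sum_erase Finset.univ (fun i => A i j * |e j|)
          (Finset.mem_univ j)]
    _ = 0 := by rw [hcol j, zero_mul]

/-- A posteriori error estimate not requiring the dual solution:
`|zᵀ (p(T) − p̃(T))| ≤ ‖z‖_∞ (∫₀ᵀ ‖r(t)‖_{ℓ¹} dt + ‖p(0) − p̃(0)‖_{ℓ¹})`,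
for a master equation whose matrix `A(t)` is a Markov generator
(nonnegative off-diagonals, zero column sums).
Here `‖·‖` on `Fin N → ℝ` is the sup (max-absolute-entry) norm, and the ℓ¹ norm
is written as the sum of absolute values of the entries. -/
theorem adjoint_error_estimate_dual_free {N : ℕ} (T : ℝ) (hT : 0 < T)
    (A : ℝ → Matrix (Fin N) (Fin N) ℝ) (hA : ContinuousOn A (Set.Icc 0 T))
    (hMarkov : ∀ t ∈ Set.Icc (0:ℝ) T,
      (∀ i j, i ≠ j → 0 ≤ A t i j) ∧ (∀ j, ∑ i, A t i j = 0))
    (r : ℝ → (Fin N → ℝ)) (hr : ContinuousOn r (Set.Icc 0 T))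
    (p ptilde : ℝ → (Fin N → ℝ))
    (hp : ∀ t ∈ Set.Icc (0:ℝ) T, HasDerivAt p ((A t) *ᵥ (p t)) t)
    (hptilde : ∀ t ∈ Set.Icc (0:ℝ) T,
      HasDerivAt ptilde ((A t) *ᵥ (ptilde t) + r t) t) :
    ∀ z : Fin N → ℝ,
      |z ⬝ᵥ (p T - ptilde T)|
        ≤ ‖z‖ * ((∫ t in (0:ℝ)..T, ∑ i, |r t i|)
            + ∑ i, |p 0 i - ptilde 0 i|) := by
  intro z
  set e : ℝ → Fin N → ℝ := fun t => p t - ptilde t with he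
  set g : ℝ → ℝ := fun t => ∑ i, |r t i| with hg
  set f : ℝ → ℝ := fun t => ∑ i, |e t i| with hf
  -- derivative of e
  have hde : ∀ x ∈ Set.Icc (0:ℝ) T, HasDerivAt e (A x *ᵥ e x - r x) x := by
    intro x hx
    have h1 := (hp x hx).sub (hptilde x hx)
    have h2 : A x *ᵥ p x - (A x *ᵥ ptilde x + r x) = A x *ᵥ e x - r x := by
      rw [he]; rw [Matrix.mulVec_sub]; abel
    rw [h2] at h1
    exact h1
  have hdei : ∀ x ∈ Set.Icc (0:ℝ) T, ∀ i,
      HasDerivAt (fun t => e t i) ((A x *ᵥ e x - r x) i) x := by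
    intro x hx i
    exact hasDerivAt_pi.1 (hde x hx) i
  -- continuity of f and g
  have habs : Continuous (fun v : Fin N → ℝ => ∑ i, |v i|) :=
    continuous_finset_sum _ fun i _ => (continuous_abs.comp (continuous_apply i))
  have hfc : ContinuousOn f (Set.Icc 0 T) := by
    intro x hx
    exact (habs.continuousAt.comp (hde x hx).continuousAt).continuousWithinAt
  have hgc : ContinuousOn g (Set.Icc 0 T) := habs.comp_continuousOn hr
  have hgint : MeasureTheory.IntegrableOn g (Set.Icc 0 T) := hgc.integrableOn_Icc
  -- boundary function
  set B : ℝ → ℝ := fun u => (∫ t in (0:ℝ)..u, g t) + f 0 with hB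
  have hBc : ContinuousOn B (Set.Icc 0 T) := by
    have h := intervalIntegral.continuousOn_primitive_interval
      (by rwa [Set.uIcc_of_le hT.le] : MeasureTheory.IntegrableOn g (Set.uIcc 0 T))
    rw [Set.uIcc_of_le hT.le] at h
    exact h.add continuousOn_const
  have hB' : ∀ x ∈ Set.Ico (0:ℝ) T, HasDerivWithinAt B (g x) (Set.Ici x) x := by
    intro x hx
    have hint : IntervalIntegrable g MeasureTheory.volume 0 x := by
      apply ContinuousOn.intervalIntegrable
      rw [Set.uIcc_of_le hx.1]
      exact hgc.mono (Set.Icc_subset_Icc le_rfl hx.2.le)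
    have hmem : Set.Icc (0:ℝ) T ∈ nhdsWithin x (Set.Ioi x) := Icc_mem_nhdsGT_of_mem hx
    have hmeas : StronglyMeasurableAtFilter g (nhdsWithin x (Set.Ioi x)) :=
      ⟨Set.Icc 0 T, hmem, hgc.aestronglyMeasurable measurableSet_Icc⟩
    have hcont : ContinuousWithinAt g (Set.Ioi x) x :=
      (hgc x ⟨hx.1, hx.2.le⟩).mono_of_mem_nhdsWithin hmem
    exact (intervalIntegral.integral_hasDerivWithinAt_right hint hmeas hcont).add_const _
  have ha0 : f 0 ≤ B 0 := by
    rw [hB]; simp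
  -- the slope bound
  have bound : ∀ x ∈ Set.Ico (0:ℝ) T, ∀ c, g x < c →
      ∃ᶠ zz in nhdsWithin x (Set.Ioi x), slope f x zz < c := by
    intro x hx c hc
    have hxI : x ∈ Set.Icc (0:ℝ) T := ⟨hx.1, hx.2.le⟩
    set d : Fin N → ℝ := A x *ᵥ e x - r x with hd
    set σ : Fin N → ℝ := fun i =>
      if e x i < 0 then -1 else if 0 < e x i then 1 else if d i < 0 then -1 else 1 with hσ
    have hσ1 : ∀ i, |σ i| ≤ 1 := by
      intro i; rw [hσ]; dsimp only; split_ifs <;> norm_num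
    have hσe : ∀ i, σ i * e x i = |e x i| := by
      intro i; rw [hσ]; dsimp only
      rcases lt_trichotomy (e x i) 0 with h | h | h
      · rw [if_pos h, abs_of_neg h]; ring
      · rw [h]; simp
      · rw [if_neg (not_lt.2 h.le), if_pos h, abs_of_pos h, one_mul]
    -- per-coordinate slope limits
    have hslope : ∀ i, Tendsto (slope (fun t => |e t i|) x) (nhdsWithin x (Set.Ioi x))
        (nhds (σ i * d i)) := by
      intro i
      have hdi := hdei x hxI i
      have hs : Tendsto (slope (fun t => e t i) x) (nhdsWithin x (Set.Ioi x)) (nhds (d i)) :=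
        (hasDerivAt_iff_tendsto_slope.1 hdi).mono_left
          (nhdsWithin_mono x fun zz hz => ne_of_gt hz)
      have hcont_i : ContinuousAt (fun t => e t i) x := hdi.continuousAt
      rcases lt_trichotomy (e x i) 0 with h | h | h
      · have hev : ∀ᶠ zz in nhdsWithin x (Set.Ioi x), e zz i < 0 :=
          (hcont_i.eventually_lt_const h).filter_mono nhdsWithin_le_nhds
        have hval : σ i * d i = -(d i) := by rw [hσ]; dsimp only; rw [if_pos h]; ring
        rw [hval]
        refine Tendsto.congr' ?_ hs.neg
        filter_upwards [hev] with zz hz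
        rw [slope_def_field, slope_def_field, abs_of_neg hz, abs_of_neg h]
        ring
      · have hval : σ i * d i = |d i| := by
          rw [hσ]; dsimp only
          rw [if_neg (by rw [h]; exact lt_irrefl 0), if_neg (by rw [h]; exact lt_irrefl 0)]
          rcases lt_or_ge (d i) 0 with hdlt | hdge
          · rw [if_pos hdlt, abs_of_neg hdlt]; ring
          · rw [if_neg (not_lt.2 hdge), abs_of_nonneg hdge, one_mul]
        rw [hval]
        refine Tendsto.congr' ?_ hs.abs
        filter_upwards [self_mem_nhdsWithin] with zz (hz : zz ∈ Set.Ioi x)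
        rw [slope_def_field, slope_def_field, h, abs_zero, sub_zero, sub_zero, abs_div,
          abs_of_pos (sub_pos.2 hz)]
      · have hev : ∀ᶠ zz in nhdsWithin x (Set.Ioi x), 0 < e zz i :=
          (hcont_i.eventually_const_lt h).filter_mono nhdsWithin_le_nhds
        have hval : σ i * d i = d i := by
          rw [hσ]; dsimp only; rw [if_neg (not_lt.2 h.le), if_pos h]; ring
        rw [hval]
        refine Tendsto.congr' ?_ hs
        filter_upwards [hev] with zz hz
        rw [slope_def_field, slope_def_field, abs_of_pos hz, abs_of_pos h]
    -- sum of slopes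
    have hsum : Tendsto (slope f x) (nhdsWithin x (Set.Ioi x)) (nhds (∑ i, σ i * d i)) := by
      have hcongr : ∀ zz, slope f x zz = ∑ i, slope (fun t => |e t i|) x zz := by
        intro zz
        simp only [slope_def_field, hf, ← Finset.sum_div, Finset.sum_sub_distrib]
      rw [show (slope f x) = fun zz => ∑ i, slope (fun t => |e t i|) x zz from funext hcongr]
      exact tendsto_finset_sum _ fun i _ => hslope i
    -- the limit is at most g x
    have hL : (∑ i, σ i * d i) ≤ g x := by
      have hsplit : ∀ i, σ i * d i = σ i * (A x *ᵥ e x) i + -(σ i * r x i) := by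
        intro i
        rw [hd]; simp only [Pi.sub_apply]; ring
      calc ∑ i, σ i * d i = (∑ i, σ i * (A x *ᵥ e x) i) + ∑ i, -(σ i * r x i) := by
            rw [← Finset.sum_add_distrib]; exact Finset.sum_congr rfl fun i _ => hsplit i
        _ ≤ 0 + ∑ i, |r x i| := by
            refine add_le_add (markov_dissipative (A x) (hMarkov x hxI).1 (hMarkov x hxI).2
              (e x) σ hσ1 hσe) (Finset.sum_le_sum fun i _ => ?_)
            calc -(σ i * r x i) ≤ |σ i * r x i| := neg_le_abs _
              _ = |σ i| * |r x i| := abs_mul _ _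
              _ ≤ 1 * |r x i| := mul_le_mul_of_nonneg_right (hσ1 i) (abs_nonneg _)
              _ = |r x i| := one_mul _
        _ = g x := by rw [zero_add, hg]
    exact ((hsum.eventually_lt_const (lt_of_le_of_lt hL hc))).frequently
  -- Gronwall
  have main : ∀ ⦃x⦄, x ∈ Set.Icc (0:ℝ) T → f x ≤ B x :=
    image_le_of_liminf_slope_right_le_deriv_boundary hfc ha0 hBc hB' bound
  have hfT : f T ≤ (∫ t in (0:ℝ)..T, g t) + f 0 := main ⟨hT.le, le_rfl⟩
  -- conclude
  calc |z ⬝ᵥ (p T - ptilde T)| ≤ ∑ i, |z i| * |e T i| := by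
        rw [dotProduct]
        refine (Finset.abs_sum_le_sum_abs _ _).trans (le_of_eq ?_)
        exact Finset.sum_congr rfl fun i _ => by rw [abs_mul]
    _ ≤ ∑ i, ‖z‖ * |e T i| := by
        refine Finset.sum_le_sum fun i _ => mul_le_mul_of_nonneg_right ?_ (abs_nonneg _)
        calc |z i| = ‖z i‖ := (Real.norm_eq_abs _).symm
          _ ≤ ‖z‖ := norm_le_pi_norm z i
    _ = ‖z‖ * f T := by rw [← Finset.mul_sum]
    _ ≤ ‖z‖ * ((∫ t in (0:ℝ)..T, g t) + f 0) :=
        mul_le_mul_of_nonneg_left hfT (norm_nonneg z)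
    _ = ‖z‖ * ((∫ t in (0:ℝ)..T, ∑ i, |r t i|) + ∑ i, |p 0 i - ptilde 0 i|) := by
        simp only [hg, hf, he, Pi.sub_apply]
end

section
/- Let T > 0 and let A : [0,T] → ℝ^{N×N} be continuous such that for each t, A(t) is a Markov generator, i.e., its off-diagonal entries are nonnegative and each of its columns sums to zero. Let r : [0,T] → ℝ^N be continuous, and suppose p, p̃ : [0,T] → ℝ^N are differentiable with p′(t) = A(t) p(t) and p̃′(t) = A(t) p̃(t) + r(t). If ∫₀ᵀ ‖r(t)‖_{ℓ¹} dt + ‖p(0) − p̃(0)‖_{ℓ¹} ≤ ε for some ε > 0, then for every component index i one has |p_i(T) − p̃_i(T)| ≤ ε; i.e., p̃(T) − ε e ≤ p(T) ≤ p̃(T) + ε e componentwise, where e = (1,…,1). -/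
open Matrix

/-- ℓ¹-contraction property of Markov generators: if `c` is a sign vector matching the signs
of `q`, then `∑ i, c i * (M *ᵥ q) i ≤ 0`. -/
lemma markov_key_contraction {N : ℕ} (M : Matrix (Fin N) (Fin N) ℝ)
    (hoff : ∀ i j, i ≠ j → 0 ≤ M i j) (hcol : ∀ j, ∑ i, M i j = 0)
    (q c : Fin N → ℝ) (hc : ∀ i, c i = 1 ∨ c i = -1)
    (hcq : ∀ i, c i * q i = |q i|) :
    ∑ i, c i * (M *ᵥ q) i ≤ 0 := by
  have h1 : ∑ i, c i * (M *ᵥ q) i = ∑ j, ∑ i, c i * (M i j * q j) := by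
    simp only [Matrix.mulVec, dotProduct, Finset.mul_sum]
    exact Finset.sum_comm
  rw [h1]
  apply Finset.sum_nonpos
  intro j _
  have hterm : ∀ i, c i * (M i j * q j) ≤ M i j * |q j| := by
    intro i
    rcases eq_or_ne i j with rfl | hij
    · have : c i * (M i i * q i) = M i i * (c i * q i) := by ring
      rw [this, hcq i]
    · have hM := hoff i j hij
      have hle : c i * q j ≤ |q j| := by
        rcases hc i with h | h
        · rw [h, one_mul]; exact le_abs_self _
        · rw [h, neg_one_mul]; exact neg_le_abs _
      calc c i * (M i j * q j) = M i j * (c i * q j) := by ring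
        _ ≤ M i j * |q j| := mul_le_mul_of_nonneg_left hle hM
  calc ∑ i, c i * (M i j * q j) ≤ ∑ i, M i j * |q j| :=
        Finset.sum_le_sum fun i _ => hterm i
    _ = (∑ i, M i j) * |q j| := by rw [Finset.sum_mul]
    _ = 0 := by rw [hcol j, zero_mul]

/-- Component-wise error bound: if
`∫₀ᵀ ‖r(t)‖_{ℓ¹} dt + ‖p(0) − p̃(0)‖_{ℓ¹} ≤ ε`, then every component of the error at
the final time satisfies `|pᵢ(T) − p̃ᵢ(T)| ≤ ε`, i.e. `p̃(T) − εe ≤ p(T) ≤ p̃(T) + εe`. -/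
theorem componentwise_error_bound {N : ℕ} (T : ℝ) (hT : 0 < T)
    (A : ℝ → Matrix (Fin N) (Fin N) ℝ) (hA : ContinuousOn A (Set.Icc 0 T))
    (hMarkov : ∀ t ∈ Set.Icc (0:ℝ) T,
      (∀ i j, i ≠ j → 0 ≤ A t i j) ∧ (∀ j, ∑ i, A t i j = 0))
    (r : ℝ → (Fin N → ℝ)) (hr : ContinuousOn r (Set.Icc 0 T))
    (p ptilde : ℝ → (Fin N → ℝ))
    (hp : ∀ t ∈ Set.Icc (0:ℝ) T, HasDerivAt p ((A t) *ᵥ (p t)) t)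
    (hptilde : ∀ t ∈ Set.Icc (0:ℝ) T,
      HasDerivAt ptilde ((A t) *ᵥ (ptilde t) + r t) t)
    (ε : ℝ) (hε : 0 < ε)
    (hbound : (∫ t in (0:ℝ)..T, ∑ i, |r t i|) + ∑ i, |p 0 i - ptilde 0 i| ≤ ε) :
    ∀ i, |p T i - ptilde T i| ≤ ε ∧
      ptilde T i - ε ≤ p T i ∧ p T i ≤ ptilde T i + ε := by
  classical
  set q : ℝ → Fin N → ℝ := fun t => p t - ptilde t with hqdef
  -- derivative of each component of q
  have hq : ∀ t ∈ Set.Icc (0:ℝ) T, ∀ i,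
      HasDerivAt (fun u => q u i) ((A t *ᵥ q t) i - r t i) t := by
    intro t ht i
    have h1 := hasDerivAt_pi.mp (hp t ht) i
    have h2 := hasDerivAt_pi.mp (hptilde t ht) i
    have h3 : HasDerivAt (fun u => q u i)
        ((A t *ᵥ p t) i - (A t *ᵥ ptilde t + r t) i) t := h1.sub h2
    convert h3 using 1
    simp [hqdef, Matrix.mulVec_sub]
    ring
  set φ : (Fin N → Bool) → ℝ → ℝ :=
    fun s t => ∑ i, (if s i then (1:ℝ) else -1) * q t i with hφdef
  set f : ℝ → ℝ := fun t => ∑ i, |q t i| with hfdef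
  have hφ_le : ∀ s t, φ s t ≤ f t := by
    intro s t
    apply Finset.sum_le_sum
    intro i _
    by_cases h : s i
    · simp [h, le_abs_self]
    · simp [h, neg_le_abs]
  have hφ_eq : ∀ t, φ (fun i => decide (0 ≤ q t i)) t = f t := by
    intro t
    apply Finset.sum_congr rfl
    intro i _
    by_cases h : 0 ≤ q t i
    · simp [h, abs_of_nonneg h]
    · simp [h, abs_of_neg (not_le.mp h)]
  have hφderiv : ∀ s, ∀ t ∈ Set.Icc (0:ℝ) T,
      HasDerivAt (φ s)
        (∑ i, (if s i then (1:ℝ) else -1) * ((A t *ᵥ q t) i - r t i)) t := by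
    intro s t ht
    exact HasDerivAt.fun_sum fun i _ => (hq t ht i).const_mul _
  have hf_cont : ContinuousOn f (Set.Icc 0 T) := by
    apply continuousOn_finset_sum
    intro i _
    intro t ht
    exact ((hq t ht i).continuousAt.continuousWithinAt).abs
  -- extended version of ‖r‖₁
  set G : ℝ → ℝ := fun t => ∑ i, |r ((Set.projIcc 0 T hT.le t : Set.Icc (0:ℝ) T) : ℝ) i|
    with hGdef
  have hrc : Continuous fun t => r ((Set.projIcc 0 T hT.le t : Set.Icc (0:ℝ) T) : ℝ) :=
    hr.comp_continuous (continuous_subtype_val.comp continuous_projIcc)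
      fun x => Subtype.coe_prop _
  have hGcont : Continuous G :=
    continuous_finset_sum _ fun i _ => ((continuous_apply i).comp hrc).abs
  have hGeq : ∀ t ∈ Set.Icc (0:ℝ) T, G t = ∑ i, |r t i| := by
    intro t ht
    simp only [hGdef, Set.projIcc_of_mem hT.le ht]
  have hGnn : ∀ t, 0 ≤ G t := fun t => Finset.sum_nonneg fun i _ => abs_nonneg _
  set B : ℝ → ℝ := fun t => f 0 + ∫ s in (0:ℝ)..t, G s with hBdef
  have hB' : ∀ x, HasDerivAt B (G x) x := fun x =>
    ((hGcont.integral_hasStrictDerivAt 0 x).hasDerivAt).const_add (f 0)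
  have main : ∀ x ∈ Set.Icc (0:ℝ) T, f x ≤ B x := by
    apply image_le_of_liminf_slope_right_le_deriv_boundary (B' := G) hf_cont
    · simp [hBdef, intervalIntegral.integral_same]
    · exact fun x _ => (hB' x).continuousAt.continuousWithinAt
    · exact fun x _ => (hB' x).hasDerivWithinAt
    · intro x hx ρ hρ
      have hxI : x ∈ Set.Icc (0:ℝ) T := Set.Ico_subset_Icc_self hx
      have hρ' : ∑ i, |r x i| < ρ := by rwa [hGeq x hxI] at hρ
      have hρ0 : 0 < ρ :=
        lt_of_le_of_lt (Finset.sum_nonneg fun i _ => abs_nonneg _) hρ'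
      have hclaim : ∀ s, ∀ᶠ z in nhdsWithin x (Set.Ioi x),
          φ s z < f x + ρ * (z - x) := by
        intro s
        by_cases hs : φ s x = f x
        · -- s is a maximizing sign pattern at x
          have hterm : ∀ i, (if s i then (1:ℝ) else -1) * q x i = |q x i| := by
            have h := (Finset.sum_eq_sum_iff_of_le
              (fun i _ => by
                by_cases hsi : s i
                · simp [hsi, le_abs_self]
                · simp [hsi, neg_le_abs])).mp hs
            intro i; exact h i (Finset.mem_univ i)
          have hd : (∑ i, (if s i then (1:ℝ) else -1) * ((A x *ᵥ q x) i - r x i)) < ρ := by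
            have h1 : ∑ i, (if s i then (1:ℝ) else -1) * (A x *ᵥ q x) i ≤ 0 :=
              markov_key_contraction (A x) (hMarkov x hxI).1 (hMarkov x hxI).2 (q x) _
                (fun i => by by_cases h : s i <;> simp [h]) hterm
            have h2 : ∑ i, (if s i then (1:ℝ) else -1) * (-(r x i)) ≤ ∑ i, |r x i| := by
              apply Finset.sum_le_sum
              intro i _
              by_cases h : s i <;> simp [h, le_abs_self, neg_le_abs]
            have hsplit : (∑ i, (if s i then (1:ℝ) else -1) * ((A x *ᵥ q x) i - r x i))
                = (∑ i, (if s i then (1:ℝ) else -1) * (A x *ᵥ q x) i)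
                  + ∑ i, (if s i then (1:ℝ) else -1) * (-(r x i)) := by
              rw [← Finset.sum_add_distrib]
              apply Finset.sum_congr rfl
              intro i _
              ring
            rw [hsplit]
            calc _ ≤ (0:ℝ) + ∑ i, |r x i| := add_le_add h1 h2
              _ = ∑ i, |r x i| := zero_add _
              _ < ρ := hρ'
          have hderivW : HasDerivWithinAt (φ s)
              (∑ i, (if s i then (1:ℝ) else -1) * ((A x *ᵥ q x) i - r x i))
              (Set.Ioi x) x := (hφderiv s x hxI).hasDerivWithinAt
          have hev := hderivW.limsup_slope_le' (by simp : x ∉ Set.Ioi x) hd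
          filter_upwards [hev, self_mem_nhdsWithin] with z hz hzx
          rw [slope_def_field] at hz
          have hzx' : (0:ℝ) < z - x := sub_pos.mpr hzx
          have := (div_lt_iff₀ hzx').mp hz
          linarith [hs]
        · have hlt : φ s x < f x := lt_of_le_of_ne (hφ_le s x) hs
          have hcont : ContinuousAt (φ s) x := (hφderiv s x hxI).continuousAt
          have hev : ∀ᶠ z in nhds x, φ s z < f x :=
            hcont.eventually_lt_const hlt
          filter_upwards [hev.filter_mono nhdsWithin_le_nhds, self_mem_nhdsWithin]
            with z hz hzx
          have : 0 < ρ * (z - x) := mul_pos hρ0 (sub_pos.mpr hzx)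
          linarith
      have hall : ∀ᶠ z in nhdsWithin x (Set.Ioi x),
          ∀ s : Fin N → Bool, φ s z < f x + ρ * (z - x) :=
        Filter.eventually_all.mpr hclaim
      apply Filter.Eventually.frequently
      filter_upwards [hall, self_mem_nhdsWithin] with z hz hzx
      have hfz : f z < f x + ρ * (z - x) := by
        rw [← hφ_eq z]; exact hz _
      rw [slope_def_field]
      rw [div_lt_iff₀ (sub_pos.mpr hzx)]
      linarith
  have hfT : f T ≤ B T := main T (Set.right_mem_Icc.mpr hT.le)
  have hint : (∫ s in (0:ℝ)..T, G s) = ∫ t in (0:ℝ)..T, ∑ i, |r t i| := by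
    apply intervalIntegral.integral_congr
    intro z hz
    exact hGeq z (by rwa [Set.uIcc_of_le hT.le] at hz)
  have hf0 : f 0 = ∑ i, |p 0 i - ptilde 0 i| := rfl
  have hfin : f T ≤ ε := by
    rw [hBdef] at hfT
    simp only at hfT
    rw [hint, hf0] at hfT
    linarith
  intro i
  have h1 : |p T i - ptilde T i| ≤ f T := by
    have : |q T i| ≤ f T :=
      Finset.single_le_sum (fun j _ => abs_nonneg (q T j)) (Finset.mem_univ i)
    exact this
  have h2 : |p T i - ptilde T i| ≤ ε := h1.trans hfin
  have h3 := abs_le.mp h2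
  exact ⟨h2, by linarith [h3.1], by linarith [h3.2]⟩
end

section
/- Let T > 0 and let B : [0,T] → ℝ^{N×N} be continuous such that for each t, B(t) has nonnegative off-diagonal entries and each of its columns has sum ≤ 0 (a truncated, sub-Markovian generator). Suppose q : [0,T] → ℝ^N is differentiable and satisfies q′(t) = −B(t)ᵀ q(t) with terminal condition q(T) = z, where z ≥ 0 componentwise. Then for every t ∈ [0,T], q(t) ≥ 0 componentwise and ‖q(t)‖_∞ ≤ ‖z‖_∞. -/
open Matrix Set Filter Topology

lemma key_nonneg {N : ℕ} (S : ℝ) (M : ℝ → Matrix (Fin N) (Fin N) ℝ)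
    (K : ℝ) (hK : 0 ≤ K)
    (hM : ∀ s ∈ Set.Icc (0:ℝ) S, ∀ i j, 0 ≤ M s i j)
    (hMK : ∀ s ∈ Set.Icc (0:ℝ) S, ∀ i, ∑ j, M s i j ≤ K)
    (d : ℝ → Fin N → ℝ) (hd : ∀ s ∈ Set.Icc (0:ℝ) S, ∀ i, 0 ≤ d s i)
    (u : ℝ → Fin N → ℝ)
    (hu : ∀ s ∈ Set.Icc (0:ℝ) S, HasDerivAt u (M s *ᵥ u s + d s) s)
    (hu0 : ∀ i, 0 ≤ u 0 i) :
    ∀ s ∈ Set.Icc (0:ℝ) S, ∀ i, 0 ≤ u s i := by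
  rcases lt_or_ge S 0 with hS' | hS
  · intro s hs
    exact absurd (hs.1.trans hs.2) (not_le.2 hS')
  -- main claim with the ε-perturbation
  have main : ∀ ε > 0, ∀ s ∈ Set.Icc (0:ℝ) S, ∀ i,
      0 < u s i + ε * Real.exp ((K+1) * s) := by
    intro ε hε
    set l : ℝ := K + 1 with hl
    set g : ℝ → Fin N → ℝ := fun s i => u s i + ε * Real.exp (l * s) with hg
    have hgcont : ∀ j, ∀ s ∈ Set.Icc (0:ℝ) S, ContinuousAt (fun s => g s j) s := by
      intro j s hs
      have h1 : ContinuousAt u s := (hu s hs).continuousAt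
      have h2 : ContinuousAt (fun s => u s j) s := by
        exact (continuous_apply j).continuousAt.comp h1
      exact h2.add (by fun_prop)
    by_contra hbad
    push_neg at hbad
    obtain ⟨s₁, hs₁, j₁, hj₁⟩ := hbad
    set A : Set ℝ := ⋃ j : Fin N, (Set.Icc (0:ℝ) S ∩ (fun s => g s j) ⁻¹' Set.Iic 0) with hA
    have hAclosed : IsClosed A := by
      apply isClosed_iUnion_of_finite
      intro j
      apply ContinuousOn.preimage_isClosed_of_isClosed _ isClosed_Icc isClosed_Iic
      intro s hs
      exact (hgcont j s hs).continuousWithinAt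
    have hAne : A.Nonempty := ⟨s₁, Set.mem_iUnion.2 ⟨j₁, hs₁, hj₁⟩⟩
    have hAbdd : BddBelow A := ⟨0, fun s hs => by
      obtain ⟨j, hj, -⟩ := Set.mem_iUnion.1 hs; exact hj.1⟩
    set s₀ := sInf A with hs₀def
    have hs₀A : s₀ ∈ A := hAclosed.csInf_mem hAne hAbdd
    obtain ⟨i₀, hi₀Icc, hi₀le⟩ : ∃ i₀, s₀ ∈ Set.Icc (0:ℝ) S ∧ g s₀ i₀ ≤ 0 := by
      obtain ⟨j, hj⟩ := Set.mem_iUnion.1 hs₀A; exact ⟨j, hj.1, hj.2⟩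
    have hs₀pos : 0 < s₀ := by
      rcases lt_or_eq_of_le hi₀Icc.1 with h | h
      · exact h
      · exfalso
        have : g 0 i₀ ≤ 0 := by rw [← h] at hi₀le; exact hi₀le
        have : 0 < g 0 i₀ := by
          simp only [hg, mul_zero, Real.exp_zero, mul_one]
          have := hu0 i₀; linarith
        linarith
    have hbefore : ∀ s ∈ Set.Ico (0:ℝ) s₀, ∀ j, 0 < g s j := by
      intro s hs j
      by_contra h
      push_neg at h
      have hsA : s ∈ A := Set.mem_iUnion.2 ⟨j, ⟨hs.1, hs.2.le.trans hi₀Icc.2⟩, h⟩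
      exact absurd (csInf_le hAbdd hsA) (not_le.2 hs.2)
    -- all components nonneg at s₀
    have hnn : ∀ j, 0 ≤ g s₀ j := by
      intro j
      have htend : Tendsto (fun s => g s j) (𝓝[<] s₀) (𝓝 (g s₀ j)) :=
        ((hgcont j s₀ hi₀Icc).tendsto).mono_left nhdsWithin_le_nhds
      refine ge_of_tendsto htend ?_
      filter_upwards [Ioo_mem_nhdsLT_of_mem (⟨hs₀pos, le_refl s₀⟩ : s₀ ∈ Set.Ioc 0 s₀)]
        with s hs
      exact (hbefore s ⟨hs.1.le, hs.2⟩ j).le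
    have hi₀eq : g s₀ i₀ = 0 := le_antisymm hi₀le (hnn i₀)
    -- derivative of the i₀ component of g at s₀
    have hulow : ∀ j, -(ε * Real.exp (l * s₀)) ≤ u s₀ j := by
      intro j
      have := hnn j
      simp only [hg] at this
      linarith
    set D : ℝ := (M s₀ *ᵥ u s₀ + d s₀) i₀ + ε * (l * Real.exp (l * s₀)) with hD
    have hderiv : HasDerivAt (fun s => g s i₀) D s₀ := by
      have h1 : HasDerivAt (fun s => u s i₀) ((M s₀ *ᵥ u s₀ + d s₀) i₀) s₀ :=
        hasDerivAt_pi.1 (hu s₀ hi₀Icc) i₀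
      have h2 : HasDerivAt (fun s => ε * Real.exp (l * s)) (ε * (Real.exp (l * s₀) * l)) s₀ := by
        simpa using (((hasDerivAt_id s₀).const_mul l).exp).const_mul ε
      have := h1.add h2
      simp only [hD]
      refine this.congr_deriv (Eq.symm ?_)
      ring
    have hDpos : 0 < D := by
      have hMu : -(ε * Real.exp (l * s₀)) * K ≤ (M s₀ *ᵥ u s₀) i₀ := by
        have h1 : ∀ j ∈ Finset.univ, M s₀ i₀ j * (-(ε * Real.exp (l * s₀))) ≤ M s₀ i₀ j * u s₀ j :=
          fun j _ => mul_le_mul_of_nonneg_left (hulow j) (hM s₀ hi₀Icc i₀ j)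
        have h2 : ∑ j, M s₀ i₀ j * (-(ε * Real.exp (l * s₀))) ≤ ∑ j, M s₀ i₀ j * u s₀ j :=
          Finset.sum_le_sum h1
        have h3 : ∑ j, M s₀ i₀ j * (-(ε * Real.exp (l * s₀)))
            = (∑ j, M s₀ i₀ j) * (-(ε * Real.exp (l * s₀))) := by
          rw [Finset.sum_mul]
        have h4 : -(ε * Real.exp (l * s₀)) * K ≤ (∑ j, M s₀ i₀ j) * (-(ε * Real.exp (l * s₀))) := by
          have hexp : 0 < ε * Real.exp (l * s₀) := mul_pos hε (Real.exp_pos _)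
          nlinarith [hMK s₀ hi₀Icc i₀]
        calc -(ε * Real.exp (l * s₀)) * K ≤ ∑ j, M s₀ i₀ j * (-(ε * Real.exp (l * s₀))) := by
              rw [h3]; exact h4
          _ ≤ ∑ j, M s₀ i₀ j * u s₀ j := h2
          _ = (M s₀ *ᵥ u s₀) i₀ := by simp [Matrix.mulVec, dotProduct]
      have hdnn : 0 ≤ d s₀ i₀ := hd s₀ hi₀Icc i₀
      have hexp : 0 < ε * Real.exp (l * s₀) := mul_pos hε (Real.exp_pos _)
      simp only [hD, Pi.add_apply, hl]
      nlinarith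
    -- but the left slope is nonpositive
    have hDnonpos : D ≤ 0 := by
      have hW : HasDerivWithinAt (fun s => g s i₀) D (Set.Iio s₀) s₀ :=
        hderiv.hasDerivWithinAt
      rw [hasDerivWithinAt_iff_tendsto_slope] at hW
      have hsub : Set.Iio s₀ \ {s₀} = Set.Iio s₀ := by
        apply Set.diff_singleton_eq_self; simp
      rw [hsub] at hW
      refine le_of_tendsto hW ?_
      filter_upwards [Ioo_mem_nhdsLT_of_mem (⟨hs₀pos, le_refl s₀⟩ : s₀ ∈ Set.Ioc 0 s₀)]
        with s hs
      have hgpos : 0 < g s i₀ := hbefore s ⟨hs.1.le, hs.2⟩ i₀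
      have : slope (fun s => g s i₀) s₀ s = (g s i₀ - g s₀ i₀) / (s - s₀) := by
        rw [slope_def_field]
      rw [this, hi₀eq, sub_zero]
      exact div_nonpos_of_nonneg_of_nonpos hgpos.le (by linarith [hs.2])
    linarith
  -- conclude
  intro s hs i
  by_contra hneg
  push_neg at hneg
  set ε : ℝ := (-(u s i)) / (2 * Real.exp ((K+1) * S)) with hε
  have hεpos : 0 < ε := div_pos (by linarith) (by positivity)
  have h1 := main ε hεpos s hs i
  have h2 : Real.exp ((K+1) * s) ≤ Real.exp ((K+1) * S) := by
    apply Real.exp_le_exp.2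
    have : 0 < K + 1 := by linarith
    nlinarith [hs.2]
  have h3 : ε * Real.exp ((K+1) * s) ≤ ε * Real.exp ((K+1) * S) :=
    mul_le_mul_of_nonneg_left h2 hεpos.le
  have h4 : ε * Real.exp ((K+1) * S) = -(u s i) / 2 := by
    rw [hε]; field_simp
  linarith

/-- For the adjoint equation of a truncated (sub-Markovian) generator — nonnegative
off-diagonal entries and column sums `≤ 0` — with nonnegative terminal data `z`,
the solution stays componentwise nonnegative and its sup norm is bounded by `‖z‖_∞`.
Here `‖·‖` on `Fin N → ℝ` is the sup (max-absolute-entry) norm. -/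
theorem adjoint_truncated_nonneg_and_bounded {N : ℕ} (T : ℝ) (hT : 0 < T)
    (B : ℝ → Matrix (Fin N) (Fin N) ℝ) (hB : ContinuousOn B (Set.Icc 0 T))
    (hSubMarkov : ∀ t ∈ Set.Icc (0:ℝ) T,
      (∀ i j, i ≠ j → 0 ≤ B t i j) ∧ (∀ j, ∑ i, B t i j ≤ 0))
    (q : ℝ → (Fin N → ℝ)) (z : Fin N → ℝ) (hz : ∀ i, 0 ≤ z i)
    (hq : ∀ t ∈ Set.Icc (0:ℝ) T, HasDerivAt q (-((B t)ᵀ *ᵥ (q t))) t)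
    (hqT : q T = z) :
    ∀ t ∈ Set.Icc (0:ℝ) T, (∀ i, 0 ≤ q t i) ∧ ‖q t‖ ≤ ‖z‖ := by
  -- bound on entries of B
  set F : ℝ → (Fin N × Fin N → ℝ) := fun t ij => B t ij.1 ij.2 with hFdef
  have hFc : ContinuousOn F (Set.Icc 0 T) := by
    apply continuousOn_pi.2
    intro ij
    exact (continuous_id.matrix_elem ij.1 ij.2).comp_continuousOn hB
  obtain ⟨C, hC⟩ := (isCompact_Icc : IsCompact (Set.Icc (0:ℝ) T)).exists_bound_of_continuousOn hFc
  have hC0 : 0 ≤ C := le_trans (norm_nonneg _) (hC 0 ⟨le_refl 0, hT.le⟩)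
  have hCentry : ∀ t ∈ Set.Icc (0:ℝ) T, ∀ i j, |B t i j| ≤ C := by
    intro t ht i j
    have h1 := norm_le_pi_norm (F t) (i, j)
    simp only [hFdef, Real.norm_eq_abs] at h1
    exact h1.trans (hC t ht)
  -- time reversal
  set p : ℝ → Fin N → ℝ := fun s => q (T - s) with hpdef
  have hmem : ∀ s ∈ Set.Icc (0:ℝ) T, T - s ∈ Set.Icc (0:ℝ) T := by
    intro s hs; exact ⟨by linarith [hs.2], by linarith [hs.1]⟩
  have hp : ∀ s ∈ Set.Icc (0:ℝ) T, HasDerivAt p ((B (T - s))ᵀ *ᵥ p s) s := by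
    intro s hs
    have h1 : HasDerivAt (fun s : ℝ => T - s) (-1) s := by
      simpa using (hasDerivAt_id' s).const_sub T
    have h2 := HasDerivAt.scomp (𝕜 := ℝ) s (hq (T - s) (hmem s hs)) h1
    simpa [hpdef, Function.comp_def] using h2
  -- the shifted matrix
  set M₁ : ℝ → Matrix (Fin N) (Fin N) ℝ := fun s => (B (T - s))ᵀ + C • (1 : Matrix (Fin N) (Fin N) ℝ)
    with hM₁def
  have hM₁entry : ∀ s, ∀ i j : Fin N, M₁ s i j = B (T - s) j i + (if i = j then C else 0) := by
    intro s i j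
    simp [hM₁def, Matrix.add_apply, Matrix.transpose_apply, Matrix.smul_apply, Matrix.one_apply,
      mul_ite, mul_one, mul_zero]
  have hM₁nonneg : ∀ s ∈ Set.Icc (0:ℝ) T, ∀ i j, 0 ≤ M₁ s i j := by
    intro s hs i j
    rw [hM₁entry]
    rcases eq_or_ne i j with h | h
    · subst h
      have h3 := hCentry (T - s) (hmem s hs) i i
      rw [abs_le] at h3
      rw [if_pos rfl]
      linarith [h3.1]
    · have := (hSubMarkov (T - s) (hmem s hs)).1 j i (Ne.symm h)
      simp [h, this]
  have hM₁row : ∀ s ∈ Set.Icc (0:ℝ) T, ∀ i, ∑ j, M₁ s i j ≤ C := by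
    intro s hs i
    have hcol := (hSubMarkov (T - s) (hmem s hs)).2 i
    have : ∑ j, M₁ s i j = (∑ j, B (T - s) j i) + C := by
      simp only [hM₁entry]
      rw [Finset.sum_add_distrib]
      simp [Finset.sum_ite_eq]
    rw [this]
    linarith
  have hmulvec : ∀ s (v : Fin N → ℝ), M₁ s *ᵥ v = (B (T - s))ᵀ *ᵥ v + C • v := by
    intro s v
    funext i
    simp only [Matrix.mulVec, dotProduct, hM₁def, Matrix.add_apply, Matrix.smul_apply,
      Matrix.one_apply, Matrix.transpose_apply, Pi.add_apply, Pi.smul_apply, smul_eq_mul,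
      add_mul, Finset.sum_add_distrib, ite_mul, zero_mul, mul_ite, mul_one, mul_zero]
    congr 1
    simp [Finset.sum_ite_eq]
  -- first application: nonnegativity
  set u1 : ℝ → Fin N → ℝ := fun s => Real.exp (C * s) • p s with hu1def
  have hu1 : ∀ s ∈ Set.Icc (0:ℝ) T, HasDerivAt u1 (M₁ s *ᵥ u1 s + (fun _ : Fin N => (0:ℝ))) s := by
    intro s hs
    have hexp : HasDerivAt (fun s => Real.exp (C * s)) (Real.exp (C * s) * C) s := by
      simpa using ((hasDerivAt_id s).const_mul C).exp
    have hd1 := hexp.smul (hp s hs)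
    refine hd1.congr_deriv (Eq.symm ?_)
    funext i
    have hsum : ∑ j, B (T - s) j i * (Real.exp (C * s) * p s j)
        = Real.exp (C * s) * ∑ j, B (T - s) j i * p s j := by
      rw [Finset.mul_sum]
      exact Finset.sum_congr rfl fun j _ => by ring
    simp only [hmulvec, hu1def, Pi.add_apply, Pi.smul_apply, smul_eq_mul,
      Matrix.mulVec, dotProduct, Matrix.transpose_apply]
    rw [hsum]
    ring
  have h1 := key_nonneg T M₁ C hC0 hM₁nonneg hM₁row _
    (fun s _ i => le_refl 0) u1 hu1 (by
      intro i
      simp only [hu1def, hpdef]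
      simp [hqT, hz i])
  have hpnonneg : ∀ s ∈ Set.Icc (0:ℝ) T, ∀ i, 0 ≤ p s i := by
    intro s hs i
    have := h1 s hs i
    simp only [hu1def, Pi.smul_apply, smul_eq_mul] at this
    nlinarith [Real.exp_pos (C * s)]
  -- second application: upper bound
  set u2 : ℝ → Fin N → ℝ := fun s => Real.exp (C * s) • ((fun _ : Fin N => ‖z‖) - p s) with hu2def
  set d2 : ℝ → Fin N → ℝ := fun s i => -(Real.exp (C * s) * ‖z‖ * ∑ j, B (T - s) j i) with hd2def
  have hd2 : ∀ s ∈ Set.Icc (0:ℝ) T, ∀ i, 0 ≤ d2 s i := by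
    intro s hs i
    have hcol := (hSubMarkov (T - s) (hmem s hs)).2 i
    simp only [hd2def, neg_nonneg]
    apply mul_nonpos_of_nonneg_of_nonpos
    · positivity
    · exact hcol
  have hu2 : ∀ s ∈ Set.Icc (0:ℝ) T, HasDerivAt u2 (M₁ s *ᵥ u2 s + d2 s) s := by
    intro s hs
    have hexp : HasDerivAt (fun s => Real.exp (C * s)) (Real.exp (C * s) * C) s := by
      simpa using ((hasDerivAt_id s).const_mul C).exp
    have hsub : HasDerivAt (fun s => (fun _ : Fin N => ‖z‖) - p s)
        (0 - (B (T - s))ᵀ *ᵥ p s) s :=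
      (hasDerivAt_const s (fun _ : Fin N => ‖z‖)).sub (hp s hs)
    have hd := hexp.smul hsub
    refine hd.congr_deriv (Eq.symm ?_)
    funext i
    have hsum : ∑ j, B (T - s) j i * (Real.exp (C * s) * (‖z‖ - p s j))
        = Real.exp (C * s) * ‖z‖ * (∑ j, B (T - s) j i)
          - Real.exp (C * s) * ∑ j, B (T - s) j i * p s j := by
      rw [Finset.mul_sum, Finset.mul_sum, ← Finset.sum_sub_distrib]
      exact Finset.sum_congr rfl fun j _ => by ring
    simp only [hmulvec, hu2def, hd2def, Pi.add_apply, Pi.smul_apply, Pi.sub_apply,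
      Matrix.mulVec, dotProduct, Matrix.transpose_apply, smul_eq_mul, zero_sub,
      Pi.neg_apply, Pi.zero_apply]
    rw [hsum]
    ring
  have h2 := key_nonneg T M₁ C hC0 hM₁nonneg hM₁row d2 hd2 u2 hu2 (by
    intro i
    have hzi : z i ≤ ‖z‖ := (le_abs_self (z i)).trans (norm_le_pi_norm z i)
    simp only [hu2def, hpdef, mul_zero, Real.exp_zero, sub_zero, Pi.smul_apply, Pi.sub_apply,
      smul_eq_mul, one_mul, hqT]
    linarith)
  have hpupper : ∀ s ∈ Set.Icc (0:ℝ) T, ∀ i, p s i ≤ ‖z‖ := by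
    intro s hs i
    have := h2 s hs i
    simp only [hu2def, Pi.smul_apply, Pi.sub_apply, smul_eq_mul] at this
    nlinarith [Real.exp_pos (C * s)]
  -- conclusion
  intro t ht
  have hts : T - t ∈ Set.Icc (0:ℝ) T := hmem t ht
  have hqp : q t = p (T - t) := by
    simp only [hpdef, sub_sub_cancel]
  constructor
  · intro i
    rw [hqp]
    exact hpnonneg (T - t) hts i
  · rw [pi_norm_le_iff_of_nonneg (norm_nonneg z)]
    intro i
    rw [Real.norm_eq_abs, abs_le]
    have h0 : 0 ≤ q t i := by rw [hqp]; exact hpnonneg (T - t) hts i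
    have h1 : q t i ≤ ‖z‖ := by rw [hqp]; exact hpupper (T - t) hts i
    exact ⟨by linarith [norm_nonneg z], h1⟩
end

section
/- Let A ∈ ℝ^{N×N} be a Markov generator (nonnegative off-diagonal entries, every column summing to zero). Let the index set {1,…,N} be partitioned into a retained set I₁ and a discarded set I₂, and let A_T ∈ ℝ^{N×N} be the truncation of A given by (A_T)_{ij} = A_{ij} if i,j ∈ I₁ and (A_T)_{ij} = 0 otherwise. Let p₀ ∈ ℝ^N be componentwise nonnegative and supported on I₁ (p₀,ᵢ = 0 for i ∈ I₂). Then for every t ≥ 0 the Finite State Projection solution is a componentwise lower bound for the exact solution: exp(t A_T) p₀ ≤ exp(t A) p₀ componentwise. -/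
open Matrix NormedSpace

/-- Entrywise expansion of `exp M *ᵥ p` as a convergent series. -/
lemma fsp_exp_entry_hasSum {N : ℕ} (M : Matrix (Fin N) (Fin N) ℝ) (p : Fin N → ℝ) (i : Fin N) :
    HasSum (fun n : ℕ => (n.factorial : ℝ)⁻¹ * ((M ^ n *ᵥ p) i)) ((exp M *ᵥ p) i) := by
  letI : SeminormedRing (Matrix (Fin N) (Fin N) ℝ) := Matrix.linftyOpSemiNormedRing
  letI : NormedRing (Matrix (Fin N) (Fin N) ℝ) := Matrix.linftyOpNormedRing
  letI : NormedAlgebra ℝ (Matrix (Fin N) (Fin N) ℝ) := Matrix.linftyOpNormedAlgebra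
  let L : Matrix (Fin N) (Fin N) ℝ →ₗ[ℝ] ℝ :=
    { toFun := fun X => (X *ᵥ p) i
      map_add' := fun X Y => by simp [Matrix.add_mulVec]
      map_smul' := fun c X => by simp [Matrix.smul_mulVec] }
  have h1 : HasSum (fun n : ℕ => ((n.factorial : ℝ))⁻¹ • M ^ n) (exp M) := by
    rw [exp_eq_tsum ℝ]
    exact (expSeries_summable' (𝕂 := ℝ) M).hasSum
  have h2 := (L.toContinuousLinearMap).hasSum h1
  simpa [L, LinearMap.toContinuousLinearMap, Matrix.smul_mulVec] using h2

/-- `exp` of a real multiple of the identity matrix. -/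
lemma fsp_exp_smul_one {N : ℕ} (a : ℝ) :
    exp (a • (1 : Matrix (Fin N) (Fin N) ℝ)) =
      Real.exp a • (1 : Matrix (Fin N) (Fin N) ℝ) := by
  letI : SeminormedRing (Matrix (Fin N) (Fin N) ℝ) := Matrix.linftyOpSemiNormedRing
  letI : NormedRing (Matrix (Fin N) (Fin N) ℝ) := Matrix.linftyOpNormedRing
  letI : NormedAlgebra ℝ (Matrix (Fin N) (Fin N) ℝ) := Matrix.linftyOpNormedAlgebra
  have h1 : a • (1 : Matrix (Fin N) (Fin N) ℝ) = algebraMap ℝ _ a :=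
    (Algebra.algebraMap_eq_smul_one a).symm
  have h2 := algebraMap_exp_comm (𝕂 := ℝ) (𝔸 := Matrix (Fin N) (Fin N) ℝ) a
  rw [h1]
  erw [← h2]
  rw [Algebra.algebraMap_eq_smul_one, ← Real.exp_eq_exp_ℝ]

/-- The Finite State Projection solution is a componentwise lower bound for the exact
master-equation solution: for a Markov generator `A` (nonnegative off-diagonals, zero
column sums), a retained index set `I₁` (with discarded complement), and the truncation
`A_T` keeping only rows and columns in `I₁`, and a nonnegative initial vector supported
on `I₁`, `exp(t A_T) p₀ ≤ exp(t A) p₀` componentwise for all `t ≥ 0`. -/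
theorem fsp_lower_bound {N : ℕ} (A : Matrix (Fin N) (Fin N) ℝ)
    (hoff : ∀ i j, i ≠ j → 0 ≤ A i j) (hcol : ∀ j, ∑ i, A i j = 0)
    (I₁ : Finset (Fin N)) (AT : Matrix (Fin N) (Fin N) ℝ)
    (hAT : ∀ i j, AT i j = if i ∈ I₁ ∧ j ∈ I₁ then A i j else 0)
    (p₀ : Fin N → ℝ) (hp₀ : ∀ i, 0 ≤ p₀ i)
    (hsupp : ∀ i ∉ I₁, p₀ i = 0) :
    ∀ t : ℝ, 0 ≤ t → ∀ i, ((exp (t • AT)) *ᵥ p₀) i ≤ ((exp (t • A)) *ᵥ p₀) i := by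
  intro t ht i
  -- shift constant
  set c : ℝ := ∑ k, |A k k| with hc_def
  have hc0 : 0 ≤ c := Finset.sum_nonneg fun k _ => abs_nonneg _
  have hcdiag : ∀ k : Fin N, 0 ≤ A k k + c := by
    intro k
    have h1 : |A k k| ≤ c := Finset.single_le_sum (f := fun k => |A k k|)
      (fun k _ => abs_nonneg _) (Finset.mem_univ k)
    have := neg_abs_le (A k k)
    linarith
  set B : Matrix (Fin N) (Fin N) ℝ := A + c • (1 : Matrix (Fin N) (Fin N) ℝ) with hB_def
  set B' : Matrix (Fin N) (Fin N) ℝ := AT + c • (1 : Matrix (Fin N) (Fin N) ℝ) with hB'_def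
  have hBapp : ∀ i j, B i j = A i j + (if i = j then c else 0) := by
    intro i j
    simp [hB_def, Matrix.one_apply, mul_ite]
  have hB'app : ∀ i j, B' i j = AT i j + (if i = j then c else 0) := by
    intro i j
    simp [hB'_def, Matrix.one_apply, mul_ite]
  have hBnn : ∀ i j, 0 ≤ B i j := by
    intro i j
    rw [hBapp]
    by_cases h : i = j
    · subst h; simpa using hcdiag i
    · simpa [h] using hoff i j h
  have hB'nn : ∀ i j, 0 ≤ B' i j := by
    intro i j
    rw [hB'app, hAT]
    by_cases h : i = j
    · subst h
      by_cases hi : i ∈ I₁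
      · simpa [hi] using hcdiag i
      · simp [hi, hc0]
    · by_cases hij : i ∈ I₁ ∧ j ∈ I₁
      · simpa [hij, h] using hoff i j h
      · simp [hij, h]
  have hle : ∀ i j, j ∈ I₁ → B' i j ≤ B i j := by
    intro i j hj
    rw [hBapp, hB'app, hAT]
    by_cases hi : i ∈ I₁
    · simp [hi, hj]
    · have hij : i ≠ j := fun h => hi (h ▸ hj)
      simp only [hi, false_and, if_false, hij, if_false]
      simpa [hij] using hoff i j hij
  have hzero : ∀ i, i ∉ I₁ → ∀ j, j ∈ I₁ → B' i j = 0 := by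
    intro i hi j hj
    have hij : i ≠ j := fun h => hi (h ▸ hj)
    rw [hB'app, hAT]
    simp [hi, hij]
  -- the key induction
  have key : ∀ n : ℕ,
      (∀ k, 0 ≤ (B' ^ n *ᵥ p₀) k) ∧ (∀ k, 0 ≤ (B ^ n *ᵥ p₀) k) ∧
      (∀ k, k ∉ I₁ → (B' ^ n *ᵥ p₀) k = 0) ∧
      (∀ k, (B' ^ n *ᵥ p₀) k ≤ (B ^ n *ᵥ p₀) k) := by
    intro n
    induction n with
    | zero => simp only [pow_zero, Matrix.one_mulVec]
              exact ⟨hp₀, hp₀, hsupp, fun k => le_rfl⟩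
    | succ n ih =>
      obtain ⟨hq0, hr0, hqs, hqr⟩ := ih
      have hq' : B' ^ (n + 1) *ᵥ p₀ = B' *ᵥ (B' ^ n *ᵥ p₀) := by
        rw [Matrix.mulVec_mulVec, ← pow_succ']
      have hr' : B ^ (n + 1) *ᵥ p₀ = B *ᵥ (B ^ n *ᵥ p₀) := by
        rw [Matrix.mulVec_mulVec, ← pow_succ']
      refine ⟨?_, ?_, ?_, ?_⟩
      · intro k
        rw [hq', Matrix.mulVec, dotProduct]
        exact Finset.sum_nonneg fun j _ => mul_nonneg (hB'nn k j) (hq0 j)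
      · intro k
        rw [hr', Matrix.mulVec, dotProduct]
        exact Finset.sum_nonneg fun j _ => mul_nonneg (hBnn k j) (hr0 j)
      · intro k hk
        rw [hq', Matrix.mulVec, dotProduct]
        apply Finset.sum_eq_zero
        intro j _
        by_cases hj : j ∈ I₁
        · rw [hzero k hk j hj, zero_mul]
        · rw [hqs j hj, mul_zero]
      · intro k
        rw [hq', hr', Matrix.mulVec, Matrix.mulVec, dotProduct, dotProduct]
        apply Finset.sum_le_sum
        intro j _
        by_cases hj : j ∈ I₁
        · exact mul_le_mul (hle k j hj) (hqr j) (hq0 j) (hBnn k j)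
        · rw [hqs j hj, mul_zero]
          exact mul_nonneg (hBnn k j) (hr0 j)
  -- series comparison for the shifted matrices
  have hexpB' := fsp_exp_entry_hasSum (t • B') p₀ i
  have hexpB := fsp_exp_entry_hasSum (t • B) p₀ i
  have hmain : (exp (t • B') *ᵥ p₀) i ≤ (exp (t • B) *ᵥ p₀) i := by
    refine hasSum_le ?_ hexpB' hexpB
    intro n
    have h1 : (t • B') ^ n = t ^ n • B' ^ n := smul_pow t B' n
    have h2 : (t • B) ^ n = t ^ n • B ^ n := smul_pow t B n
    rw [h1, h2, Matrix.smul_mulVec, Matrix.smul_mulVec]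
    simp only [Pi.smul_apply, smul_eq_mul]
    obtain ⟨hq0, hr0, hqs, hqr⟩ := key n
    have htn : 0 ≤ t ^ n := pow_nonneg ht n
    have hfac : (0:ℝ) ≤ (n.factorial : ℝ)⁻¹ := by positivity
    exact mul_le_mul_of_nonneg_left
      (mul_le_mul_of_nonneg_left (hqr i) htn) hfac
  -- undo the shift
  have hshift : ∀ M : Matrix (Fin N) (Fin N) ℝ,
      exp (t • M) = Real.exp (-(t * c)) •
        exp (t • (M + c • (1 : Matrix (Fin N) (Fin N) ℝ))) := by
    intro M
    have hsplit : t • M = t • (M + c • (1 : Matrix (Fin N) (Fin N) ℝ))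
        + (-(t * c)) • (1 : Matrix (Fin N) (Fin N) ℝ) := by
      rw [smul_add, smul_smul]
      module
    have hcomm : Commute (t • (M + c • (1 : Matrix (Fin N) (Fin N) ℝ)))
        ((-(t * c)) • (1 : Matrix (Fin N) (Fin N) ℝ)) :=
      ((Commute.one_right _).smul_right _)
    rw [hsplit, Matrix.exp_add_of_commute _ _ hcomm, fsp_exp_smul_one,
      mul_smul_comm, mul_one]
  have hA := hshift A
  have hAT := hshift AT
  rw [hA, hAT, ← hB_def, ← hB'_def, Matrix.smul_mulVec, Matrix.smul_mulVec]
  simp only [Pi.smul_apply, smul_eq_mul]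
  exact mul_le_mul_of_nonneg_left hmain (Real.exp_nonneg _)
end
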